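/- Suppose the sequence g^t = (β^t, z^t, u^t), with z^t ∈ Z_r for all t, satisfies the PPA variational inequality with a symmetric positive definite matrix H. Then for every saddle point g*, the sequence t ↦ ‖g^t − g*‖_H is monotonically non-increasing. -/

import Mathlib

open Matrix Filter

noncomputable section

/-- Vectors in ℝ^p. -/
abbrev Vec (p : ℕ) := Fin p → ℝ

/-- Triples `g = (β, z, u) ∈ ℝ^p × ℝ^p × ℝ^p`. -/
abbrev Trip (p : ℕ) := Vec p × Vec p × Vec p

/-- Index type for ℝ^{3p}. -/
abbrev Idx3 (p : ℕ) := Fin p ⊕ Fin p ⊕ Fin p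

/-- Identify a triple `(β, z, u)` with a vector in ℝ^{3p}. -/
def toSum {p : ℕ} (g : Trip p) : Idx3 p → ℝ := Sum.elim g.1 (Sum.elim g.2.1 g.2.2)

/-- The operator `F(β, z, u) = (−Aᵀu, u, Aβ − z − c)`. -/
def Fop {p : ℕ} (A : Matrix (Fin p) (Fin p) ℝ) (c : Vec p) (g : Trip p) : Trip p :=
  (-(Aᵀ *ᵥ g.2.2), g.2.2, A *ᵥ g.1 - g.2.1 - c)

/-- Membership in the box `Z_r = {z : ‖z‖_∞ ≤ r}`. -/
def inZ {p : ℕ} (r : ℝ) (z : Vec p) : Prop := ∀ j, |z j| ≤ r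

/-- The ℓ₁ norm on ℝ^p. -/
def l1 {p : ℕ} (β : Vec p) : ℝ := ∑ j, |β j|

/-- The Euclidean inner product on ℝ^{3p}. -/
def ip {p : ℕ} (v w : Trip p) : ℝ := toSum v ⬝ᵥ toSum w

/-- The bilinear form `⟨v, H w⟩` on ℝ^{3p}; in particular `ipH H v v = ‖v‖_H²`. -/
def ipH {p : ℕ} (H : Matrix (Idx3 p) (Idx3 p) ℝ) (v w : Trip p) : ℝ :=
  toSum v ⬝ᵥ (H *ᵥ toSum w)

/-- `g* = (β*, z*, u*)` is a saddle point: `z* ∈ Z_r` and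
`‖β‖₁ − ‖β*‖₁ + ⟨g − g*, F(g*)⟩ ≥ 0` for all `g = (β, z, u)` with `z ∈ Z_r`. -/
def IsSaddle {p : ℕ} (A : Matrix (Fin p) (Fin p) ℝ) (c : Vec p) (r : ℝ)
    (gs : Trip p) : Prop :=
  inZ r gs.2.1 ∧ ∀ g : Trip p, inZ r g.2.1 →
    0 ≤ l1 g.1 - l1 gs.1 + ip (g - gs) (Fop A c gs)

/-- The sequence `g^t` satisfies the PPA variational inequality with matrix `H`:
for every `t` and every `g = (β, z, u)` with `z ∈ Z_r`,
`‖β‖₁ − ‖β^{t+1}‖₁ + ⟨g − g^{t+1}, F(g^{t+1})⟩ ≥ ⟨g − g^{t+1}, H(g^t − g^{t+1})⟩`. -/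
def SatisfiesPVI {p : ℕ} (A : Matrix (Fin p) (Fin p) ℝ) (c : Vec p) (r : ℝ)
    (H : Matrix (Idx3 p) (Idx3 p) ℝ) (g : ℕ → Trip p) : Prop :=
  ∀ t : ℕ, ∀ gg : Trip p, inZ r gg.2.1 →
    ipH H (gg - g (t + 1)) (g t - g (t + 1)) ≤
      l1 gg.1 - l1 (g (t + 1)).1 + ip (gg - g (t + 1)) (Fop A c (g (t + 1)))

lemma toSum_sub {p : ℕ} (v w : Trip p) : toSum (v - w) = toSum v - toSum w := by
  funext i
  cases i with
  | inl j => simp [toSum]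
  | inr j => cases j <;> simp [toSum]

lemma toSum_add {p : ℕ} (v w : Trip p) : toSum (v + w) = toSum v + toSum w := by
  funext i
  cases i with
  | inl j => simp [toSum]
  | inr j => cases j <;> simp [toSum]

lemma ip_eq {p : ℕ} (v w : Trip p) :
    ip v w = v.1 ⬝ᵥ w.1 + v.2.1 ⬝ᵥ w.2.1 + v.2.2 ⬝ᵥ w.2.2 := by
  simp [ip, toSum, dotProduct, Fintype.sum_sum_type, add_assoc]

/-- Skewness of the linear part of `F`. -/
lemma ip_skew {p : ℕ} (A : Matrix (Fin p) (Fin p) ℝ) (c : Vec p) (v w : Trip p) :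
    ip (v - w) (Fop A c v) = ip (v - w) (Fop A c w) := by
  have hdiff : Fop A c v - Fop A c w = Fop A 0 (v - w) := by
    simp only [Fop, Prod.mk_sub_mk, Prod.fst_sub, Prod.snd_sub]
    congr 1
    · rw [Matrix.mulVec_sub]
      abel
    · congr 1
      rw [Matrix.mulVec_sub]
      ext j
      simp [Pi.sub_apply]
      ring
  have hlin : ip (v - w) (Fop A c v) - ip (v - w) (Fop A c w)
      = ip (v - w) (Fop A c v - Fop A c w) := by
    simp [ip, toSum_sub, dotProduct_sub]
  have hzero : ip (v - w) (Fop A 0 (v - w)) = 0 := by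
    rw [ip_eq]
    simp only [Fop]
    rw [dotProduct_neg, dotProduct_mulVec, vecMul_transpose, dotProduct_sub, dotProduct_sub,
      dotProduct_zero, dotProduct_comm (v - w).2.2 (v - w).2.1,
      dotProduct_comm (v - w).2.2]
    ring
  have := hlin
  rw [hdiff, hzero] at this
  linarith

section Hform
variable {p : ℕ} (H : Matrix (Idx3 p) (Idx3 p) ℝ)

lemma ipH_symm (hsym : Hᵀ = H) (v w : Trip p) : ipH H v w = ipH H w v := by
  unfold ipH
  rw [dotProduct_mulVec, ← vecMul_transpose, hsym, dotProduct_comm]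

lemma ipH_add_right (v w x : Trip p) : ipH H v (w + x) = ipH H v w + ipH H v x := by
  simp [ipH, toSum_add, Matrix.mulVec_add, dotProduct_add]

lemma ipH_add_left (v w x : Trip p) : ipH H (v + w) x = ipH H v x + ipH H w x := by
  simp [ipH, toSum_add, add_dotProduct]

lemma ipH_neg_left (v w : Trip p) : ipH H (-v) w = - ipH H v w := by
  have : toSum (-v) = - toSum v := by
    funext i
    cases i with
    | inl j => simp [toSum]
    | inr j => cases j <;> simp [toSum]
  simp [ipH, this, neg_dotProduct]

end Hform

/-- Monotonicity: if `g^t` (with `z^t ∈ Z_r`) satisfies the PPA variational inequality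
with symmetric positive definite `H`, then for every saddle point `g*` the sequence
`t ↦ ‖g^t − g*‖_H` is monotonically non-increasing. -/
theorem stmt11 {p : ℕ} (A : Matrix (Fin p) (Fin p) ℝ) (c : Vec p) (r : ℝ) (hr : 0 ≤ r)
    (H : Matrix (Idx3 p) (Idx3 p) ℝ) (hH : H.PosDef)
    (g : ℕ → Trip p) (hz : ∀ t, inZ r (g t).2.1)
    (hPVI : SatisfiesPVI A c r H g) :
    ∀ gs : Trip p, IsSaddle A c r gs →
      Antitone (fun t : ℕ => Real.sqrt (ipH H (g t - gs) (g t - gs))) := by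
  intro gs hgs
  have hsym : Hᵀ = H := (by simpa using hH.1 : H.IsSymm)
  have hpsd : ∀ v : Trip p, 0 ≤ ipH H v v := by
    intro v
    simpa [ipH] using hH.posSemidef.dotProduct_mulVec_nonneg (toSum v)
  apply antitone_nat_of_succ_le
  intro t
  set b : Trip p := g (t + 1) - gs with hb
  set d : Trip p := g t - g (t + 1) with hd
  have hab : g t - gs = d + b := by
    simp [hb, hd, sub_add_sub_cancel]
  -- key: ipH H b d ≥ 0
  have h1 := hPVI t gs hgs.1
  have h2 := hgs.2 (g (t + 1)) (hz (t + 1))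
  have hskew := ip_skew A c gs (g (t + 1))
  have hnegip : ip (gs - g (t + 1)) (Fop A c gs) = - ip (g (t + 1) - gs) (Fop A c gs) := by
    have : toSum (gs - g (t + 1)) = - toSum (g (t + 1) - gs) := by
      rw [toSum_sub, toSum_sub]; abel
    simp [ip, this, neg_dotProduct]
  have hkey : 0 ≤ ipH H b d := by
    have hle : ipH H (gs - g (t + 1)) d ≤ 0 := by
      calc ipH H (gs - g (t + 1)) d
          ≤ l1 gs.1 - l1 (g (t + 1)).1 + ip (gs - g (t + 1)) (Fop A c (g (t + 1))) := h1
        _ = l1 gs.1 - l1 (g (t + 1)).1 - ip (g (t + 1) - gs) (Fop A c gs) := by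
            rw [← hskew, hnegip]; ring
        _ ≤ 0 := by linarith
    have hneg : ipH H (gs - g (t + 1)) d = - ipH H b d := by
      rw [show gs - g (t + 1) = -b by rw [hb]; abel, ipH_neg_left]
    linarith [hneg ▸ hle]
  -- expand the square
  have hexp : ipH H (g t - gs) (g t - gs)
      = ipH H b b + (ipH H d b + ipH H b d) + ipH H d d := by
    rw [hab, ipH_add_left, ipH_add_right, ipH_add_right]
    ring
  have hdb : ipH H d b = ipH H b d := ipH_symm H hsym d b
  have hineq : ipH H b b ≤ ipH H (g t - gs) (g t - gs) := by
    have := hpsd d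
    rw [hexp, hdb]
    linarith
  exact Real.sqrt_le_sqrt hineq
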